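/- Let A ∈ ℝ^{n×N} have full row rank, let x ∈ ℝ^N and e ∈ ℝ^n with b = Ax + e, let x^♯ be a best s-term approximation of x, and set ẽ = (AA*)^{-1/2}( A(x − x^♯) + e ). Let γ be a (3s)-th order P-RIP constant for A. Suppose u' is s-sparse, x'' = u' + A*(AA*)^{-1}(b − A u'), and u'' is a best s-term approximation of x''. Then ‖u'' − x^♯‖₂ ≤ 2γ ‖u' − x^♯‖₂ + 2 ‖ẽ‖₂. -/

import Mathlib

open Matrix Finset Filter Topology

/-- Euclidean norm of a vector. -/
noncomputable def euclNorm {k : ℕ} (x : Fin k → ℝ) : ℝ := Real.sqrt (∑ i, x i ^ 2)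

/-- `x` has at most `s` nonzero entries. -/
def IsSparse {k : ℕ} (s : ℕ) (x : Fin k → ℝ) : Prop :=
  (Finset.univ.filter fun i => x i ≠ 0).card ≤ s

/-- Spectral norm (ℓ²-operator norm) of a matrix. -/
noncomputable def specNorm {m k : Type*} [Fintype m] [Fintype k] [DecidableEq k]
    (M : Matrix m k ℝ) : ℝ :=
  ‖LinearMap.toContinuousLinearMap (Matrix.toEuclideanLin M)‖

/-- `cols A T` is the submatrix of `A` consisting of the columns indexed by `T`. -/
def cols {n N : ℕ} (A : Matrix (Fin n) (Fin N) ℝ) (T : Finset (Fin N)) :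
    Matrix (Fin n) {i : Fin N // i ∈ T} ℝ := Matrix.of fun r c => A r c.1

/-- `subv x T` is the subvector of `x` consisting of the entries indexed by `T`. -/
def subv {N : ℕ} (x : Fin N → ℝ) (T : Finset (Fin N)) : {i : Fin N // i ∈ T} → ℝ :=
  fun i => x i.1

/-- The feedback term `(A_T* A_T)⁻¹ A_T* A_{Tᶜ} x_{Tᶜ}`. -/
noncomputable def fb {n N : ℕ} (A : Matrix (Fin n) (Fin N) ℝ) (T : Finset (Fin N))
    (x : Fin N → ℝ) : {i : Fin N // i ∈ T} → ℝ :=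
  ((cols A T)ᵀ * cols A T)⁻¹ *ᵥ ((cols A T)ᵀ *ᵥ (cols A Tᶜ *ᵥ subv x Tᶜ))

/-- The old Mathlib `Matrix.PosSemidef.sqrt` (removed since), with its old definition. -/
noncomputable def Matrix.PosSemidef.sqrt {m : Type*} [Fintype m]
    [DecidableEq m] {M : Matrix m m ℝ} (hM : M.PosSemidef) : Matrix m m ℝ :=
  hM.1.eigenvectorUnitary.1 * diagonal ((↑) ∘ Real.sqrt ∘ hM.1.eigenvalues) *
  (star hM.1.eigenvectorUnitary : Matrix m m ℝ)

namespace Stmt16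
lemma psd_sqrt_mul_self {m : Type*} [Fintype m] [DecidableEq m] {M : Matrix m m ℝ}
    (hM : M.PosSemidef) : hM.sqrt * hM.sqrt = M := by
  have hU := Matrix.UnitaryGroup.star_mul_self hM.1.eigenvectorUnitary
  have hD : diagonal ((↑) ∘ Real.sqrt ∘ hM.1.eigenvalues : m → ℝ) *
      diagonal ((↑) ∘ Real.sqrt ∘ hM.1.eigenvalues : m → ℝ) =
        diagonal (RCLike.ofReal ∘ hM.1.eigenvalues : m → ℝ) := by
    rw [diagonal_mul_diagonal]; congr 1; funext i
    simp [Real.mul_self_sqrt (hM.eigenvalues_nonneg i)]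
  conv_rhs => rw [hM.1.spectral_theorem]
  unfold Matrix.PosSemidef.sqrt
  rw [Unitary.conjStarAlgAut_apply]
  simp only [Matrix.mul_assoc]
  rw [← Matrix.mul_assoc (star _) _ (_ * _), hU, Matrix.one_mul, ← Matrix.mul_assoc (diagonal _), hD]
lemma psd_sqrt_transpose {m : Type*} [Fintype m] [DecidableEq m] {M : Matrix m m ℝ}
    (hM : M.PosSemidef) : (hM.sqrt)ᵀ = hM.sqrt := by
  unfold Matrix.PosSemidef.sqrt
  rw [transpose_mul, transpose_mul, diagonal_transpose, ← conjTranspose_eq_transpose_of_trivial,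
    ← conjTranspose_eq_transpose_of_trivial, star_eq_conjTranspose, conjTranspose_conjTranspose,
    Matrix.mul_assoc]

noncomputable def nsq {k : ℕ} (z : Fin k → ℝ) : ℝ := z ⬝ᵥ z

def rst {k : ℕ} (T : Finset (Fin k)) (z : Fin k → ℝ) : Fin k → ℝ :=
  fun i => if i ∈ T then z i else 0

noncomputable def supp {k : ℕ} (z : Fin k → ℝ) : Finset (Fin k) :=
  Finset.univ.filter fun i => z i ≠ 0

lemma nsq_eq_sum {k : ℕ} (z : Fin k → ℝ) : nsq z = ∑ i, z i ^ 2 := by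
  simp [nsq, dotProduct, pow_two]

lemma nsq_nonneg {k : ℕ} (z : Fin k → ℝ) : 0 ≤ nsq z := by
  rw [nsq_eq_sum]; positivity

lemma enorm_eq {k : ℕ} (z : Fin k → ℝ) : euclNorm z = Real.sqrt (nsq z) := by
  rw [euclNorm, nsq_eq_sum]

lemma enorm_sq {k : ℕ} (z : Fin k → ℝ) : euclNorm z ^ 2 = nsq z := by
  rw [enorm_eq, Real.sq_sqrt (nsq_nonneg z)]

lemma enorm_nonneg' {k : ℕ} (z : Fin k → ℝ) : 0 ≤ euclNorm z := Real.sqrt_nonneg _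

lemma enorm_le_enorm {k : ℕ} {a b : Fin k → ℝ} (h : nsq a ≤ nsq b) : euclNorm a ≤ euclNorm b := by
  rw [enorm_eq, enorm_eq]; exact Real.sqrt_le_sqrt h

lemma nsq_le_nsq {k : ℕ} {a b : Fin k → ℝ} (h : euclNorm a ≤ euclNorm b) : nsq a ≤ nsq b := by
  rw [← enorm_sq, ← enorm_sq]; exact pow_le_pow_left₀ (enorm_nonneg' a) h 2

lemma eq_zero_of_enorm_eq_zero {k : ℕ} {z : Fin k → ℝ} (h : euclNorm z = 0) : z = 0 := by
  have h0 : nsq z = 0 := by rw [← enorm_sq, h]; ring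
  rw [nsq_eq_sum] at h0
  funext i
  have := (Finset.sum_eq_zero_iff_of_nonneg (fun i _ => sq_nonneg (z i))).1 h0 i (mem_univ i)
  exact pow_eq_zero_iff (two_ne_zero) |>.1 this


lemma cs_sq {k : ℕ} (a b : Fin k → ℝ) : (a ⬝ᵥ b) ^ 2 ≤ nsq a * nsq b := by
  simpa [nsq_eq_sum, dotProduct] using Finset.sum_mul_sq_le_sq_mul_sq Finset.univ a b

lemma enorm_zero {k : ℕ} : euclNorm (0 : Fin k → ℝ) = 0 := by simp [euclNorm]

lemma cs {k : ℕ} (a b : Fin k → ℝ) : a ⬝ᵥ b ≤ euclNorm a * euclNorm b := by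
  have h : (a ⬝ᵥ b) ^ 2 ≤ nsq a * nsq b := by
    simpa [nsq_eq_sum, dotProduct] using Finset.sum_mul_sq_le_sq_mul_sq Finset.univ a b
  calc a ⬝ᵥ b ≤ |a ⬝ᵥ b| := le_abs_self _
    _ = Real.sqrt ((a ⬝ᵥ b) ^ 2) := (Real.sqrt_sq_eq_abs _).symm
    _ ≤ Real.sqrt (nsq a * nsq b) := Real.sqrt_le_sqrt h
    _ = euclNorm a * euclNorm b := by rw [Real.sqrt_mul (nsq_nonneg a), enorm_eq, enorm_eq]

lemma nsq_add {k : ℕ} (a b : Fin k → ℝ) : nsq (a + b) = nsq a + 2 * (a ⬝ᵥ b) + nsq b := by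
  simp only [nsq, dotProduct, Pi.add_apply, Finset.mul_sum, ← Finset.sum_add_distrib]
  exact Finset.sum_congr rfl fun i _ => by ring

lemma nsq_smul {k : ℕ} (c : ℝ) (z : Fin k → ℝ) : nsq (c • z) = c ^ 2 * nsq z := by
  simp only [nsq, dotProduct, Pi.smul_apply, smul_eq_mul, Finset.mul_sum]
  exact Finset.sum_congr rfl fun i _ => by ring

lemma nsq_neg {k : ℕ} (z : Fin k → ℝ) : nsq (-z) = nsq z := by
  rw [← neg_one_smul ℝ z, nsq_smul]; ring

lemma enorm_neg {k : ℕ} (z : Fin k → ℝ) : euclNorm (-z) = euclNorm z := by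
  rw [enorm_eq, enorm_eq, nsq_neg]

lemma nsq_sub {k : ℕ} (a b : Fin k → ℝ) : nsq (a - b) = nsq a - 2 * (a ⬝ᵥ b) + nsq b := by
  rw [sub_eq_add_neg, nsq_add, dotProduct_neg, nsq_neg]; ring

lemma enorm_triangle {k : ℕ} (a b : Fin k → ℝ) : euclNorm (a + b) ≤ euclNorm a + euclNorm b := by
  have h : nsq (a + b) ≤ (euclNorm a + euclNorm b) ^ 2 := by
    rw [nsq_add]
    nlinarith [cs a b, enorm_sq a, enorm_sq b]
  calc euclNorm (a + b) = Real.sqrt (nsq (a + b)) := enorm_eq _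
    _ ≤ Real.sqrt ((euclNorm a + euclNorm b) ^ 2) := Real.sqrt_le_sqrt h
    _ = euclNorm a + euclNorm b := Real.sqrt_sq (by have := enorm_nonneg' a; have := enorm_nonneg' b; linarith)

lemma adj {m k : ℕ} (M : Matrix (Fin m) (Fin k) ℝ) (a : Fin m → ℝ) (b : Fin k → ℝ) :
    a ⬝ᵥ (M *ᵥ b) = (Mᵀ *ᵥ a) ⬝ᵥ b := by
  rw [Matrix.dotProduct_mulVec, Matrix.mulVec_transpose]

lemma dot_rst_self {k : ℕ} (T : Finset (Fin k)) (z : Fin k → ℝ) :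
    (rst T z) ⬝ᵥ z = nsq (rst T z) := by
  simp only [nsq, dotProduct, rst]
  exact Finset.sum_congr rfl fun i _ => by by_cases hi : i ∈ T <;> simp [hi]

lemma nsq_rst_add_compl {k : ℕ} (T : Finset (Fin k)) (z : Fin k → ℝ) :
    nsq (rst T z) + nsq (rst Tᶜ z) = nsq z := by
  simp only [nsq, dotProduct, rst, ← Finset.sum_add_distrib]
  exact Finset.sum_congr rfl fun i _ => by
    by_cases hi : i ∈ T <;> simp [hi, Finset.mem_compl]

lemma nsq_rst_le {k : ℕ} (T : Finset (Fin k)) (z : Fin k → ℝ) : nsq (rst T z) ≤ nsq z := by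
  have := nsq_rst_add_compl T z
  have h2 := nsq_nonneg (rst Tᶜ z)
  linarith

lemma rst_add {k : ℕ} (T : Finset (Fin k)) (a b : Fin k → ℝ) :
    rst T (a + b) = rst T a + rst T b := by
  funext i; by_cases hi : i ∈ T <;> simp [rst, hi]

lemma supp_rst_subset {k : ℕ} (T : Finset (Fin k)) (z : Fin k → ℝ) : supp (rst T z) ⊆ T := by
  intro i hi
  rw [supp, Finset.mem_filter] at hi
  by_contra h
  exact hi.2 (by simp [rst, h])

lemma not_mem_supp {k : ℕ} {z : Fin k → ℝ} {i : Fin k} (h : i ∉ supp z) : z i = 0 := by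
  simpa [supp] using h

end Stmt16

set_option maxHeartbeats 800000 in
open Stmt16 in
/-- one-step error reduction for NST+HT. -/
theorem stmt_16 {n N s : ℕ} (hnN : n < N) (A : Matrix (Fin n) (Fin N) ℝ)
    (hpd : (A * Aᵀ).PosDef)
    (x : Fin N → ℝ) (e b : Fin n → ℝ) (hb : b = A *ᵥ x + e)
    (xs : Fin N → ℝ) (hxs : IsSparse s xs)
    (hbest : ∀ z : Fin N → ℝ, IsSparse s z → euclNorm (xs - x) ≤ euclNorm (z - x))
    (et : Fin n → ℝ) (het : et = (hpd.posSemidef.sqrt)⁻¹ *ᵥ (A *ᵥ (x - xs) + e))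
    (γ : ℝ) (hγ0 : 0 ≤ γ)
    (hPRIP : ∀ z : Fin N → ℝ, IsSparse (3*s) z →
      (1 - γ) * euclNorm z ^ 2 ≤ euclNorm ((hpd.posSemidef.sqrt)⁻¹ *ᵥ (A *ᵥ z)) ^ 2)
    (u' x'' u'' : Fin N → ℝ) (hu' : IsSparse s u')
    (hx'' : x'' = u' + Aᵀ *ᵥ ((A * Aᵀ)⁻¹ *ᵥ (b - A *ᵥ u')))
    (hu''s : IsSparse s u'')
    (hu''b : ∀ z : Fin N → ℝ, IsSparse s z → euclNorm (u'' - x'') ≤ euclNorm (z - x'')) :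
    euclNorm (u'' - xs) ≤ 2 * γ * euclNorm (u' - xs) + 2 * euclNorm et := by
  classical
  set S : Matrix (Fin n) (Fin n) ℝ := hpd.posSemidef.sqrt with hSdef
  have hSS : S * S = A * Aᵀ := by rw [hSdef]; exact psd_sqrt_mul_self hpd.posSemidef
  have hSsym : Sᵀ = S := by
    have h := psd_sqrt_transpose hpd.posSemidef
    rw [hSdef]
    exact h
  have hdetS : IsUnit S.det := by
    have hd : S.det * S.det = (A * Aᵀ).det := by rw [← Matrix.det_mul, hSS]
    have hpos : 0 < (A * Aᵀ).det := hpd.det_pos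
    refine isUnit_iff_ne_zero.2 fun h => ?_
    rw [h, mul_zero] at hd
    exact absurd hd.symm (ne_of_gt hpos)
  have hSiS : S⁻¹ * S = 1 := Matrix.nonsing_inv_mul S hdetS
  have hSSi : S * S⁻¹ = 1 := Matrix.mul_nonsing_inv S hdetS
  have hSit : (S⁻¹)ᵀ = S⁻¹ := by rw [Matrix.transpose_nonsing_inv, hSsym]
  set B : Matrix (Fin n) (Fin N) ℝ := S⁻¹ * A with hBdef
  have hBt : Bᵀ = Aᵀ * S⁻¹ := by rw [hBdef, Matrix.transpose_mul, hSit]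
  have hBBt : B * Bᵀ = 1 := by
    rw [hBdef, hBt]
    have e1 : S⁻¹ * A * (Aᵀ * S⁻¹) = S⁻¹ * (A * (Aᵀ * S⁻¹)) := Matrix.mul_assoc _ _ _
    have e2 : A * (Aᵀ * S⁻¹) = (A * Aᵀ) * S⁻¹ := (Matrix.mul_assoc _ _ _).symm
    rw [e1, e2, ← hSS, Matrix.mul_assoc, hSSi, Matrix.mul_one, hSiS]
  have hBz : ∀ z : Fin N → ℝ, S⁻¹ *ᵥ (A *ᵥ z) = B *ᵥ z := fun z => by
    rw [Matrix.mulVec_mulVec, ← hBdef]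
  -- P-RIP in nsq form
  have hP : ∀ z : Fin N → ℝ, IsSparse (3 * s) z →
      nsq z - nsq (B *ᵥ z) ≤ γ * nsq z := by
    intro z hz
    have h := hPRIP z hz
    rw [hBz z, enorm_sq, enorm_sq] at h
    have hr : (1 - γ) * nsq z = nsq z - γ * nsq z := by ring
    linarith
  -- contraction: ‖Bz‖ ≤ ‖z‖
  have h1 : ∀ z : Fin N → ℝ, nsq (B *ᵥ z) ≤ nsq z := by
    intro z
    set P : Matrix (Fin N) (Fin N) ℝ := Bᵀ * B with hPdef
    have hPP : P * P = P := by
      rw [hPdef]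
      have e1 : Bᵀ * B * (Bᵀ * B) = Bᵀ * (B * (Bᵀ * B)) := Matrix.mul_assoc _ _ _
      have e2 : B * (Bᵀ * B) = (B * Bᵀ) * B := (Matrix.mul_assoc _ _ _).symm
      rw [e1, e2, hBBt, Matrix.one_mul]
    have hPt : Pᵀ = P := by rw [hPdef, Matrix.transpose_mul, Matrix.transpose_transpose]
    have hc1 : nsq (B *ᵥ z) = (P *ᵥ z) ⬝ᵥ z := by
      show (B *ᵥ z) ⬝ᵥ (B *ᵥ z) = _
      rw [adj B (B *ᵥ z) z, Matrix.mulVec_mulVec, ← hPdef]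
    have hc2 : nsq (P *ᵥ z) = (P *ᵥ z) ⬝ᵥ z := by
      show (P *ᵥ z) ⬝ᵥ (P *ᵥ z) = _
      rw [adj P (P *ᵥ z) z, hPt, Matrix.mulVec_mulVec, hPP]
    have hcs := cs_sq (P *ᵥ z) z
    have hc0 : 0 ≤ (P *ᵥ z) ⬝ᵥ z := by rw [← hc1]; exact nsq_nonneg _
    rw [hc1]
    rcases eq_or_lt_of_le hc0 with h0 | h0
    · rw [← h0]; exact nsq_nonneg z
    · rw [hc2] at hcs
      refine le_of_mul_le_mul_right ?_ h0
      calc (P *ᵥ z) ⬝ᵥ z * ((P *ᵥ z) ⬝ᵥ z) = ((P *ᵥ z) ⬝ᵥ z) ^ 2 := by ring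
        _ ≤ (P *ᵥ z) ⬝ᵥ z * nsq z := hcs
        _ = nsq z * ((P *ᵥ z) ⬝ᵥ z) := by ring
  -- polarization
  have hpol : ∀ a c : Fin N → ℝ, IsSparse (3 * s) (a - c) →
      4 * ((B *ᵥ a) ⬝ᵥ (B *ᵥ c) - a ⬝ᵥ c) ≤ γ * nsq (a - c) := by
    intro a c hac
    have h₁ := h1 (a + c)
    have h₂ := hP (a - c) hac
    set g : ℝ := γ * nsq (a - c) with hg
    rw [Matrix.mulVec_add] at h₁
    rw [Matrix.mulVec_sub] at h₂
    rw [nsq_add, nsq_add] at h₁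
    rw [nsq_sub, nsq_sub] at h₂
    linarith
  -- scaled polarization
  have hpol2 : ∀ a c : Fin N → ℝ, (∀ t u : ℝ, IsSparse (3 * s) (t • a - u • c)) →
      (B *ᵥ a) ⬝ᵥ (B *ᵥ c) - a ⬝ᵥ c ≤ γ * (euclNorm a * euclNorm c) := by
    intro a c hsp
    by_cases ha : euclNorm a = 0
    · rw [eq_zero_of_enorm_eq_zero ha]
      simp [Matrix.mulVec_zero, zero_dotProduct, enorm_zero]
    by_cases hc : euclNorm c = 0
    · rw [eq_zero_of_enorm_eq_zero hc]
      simp [Matrix.mulVec_zero, dotProduct_zero, enorm_zero]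
    have ha' : 0 < euclNorm a := lt_of_le_of_ne (enorm_nonneg' a) (Ne.symm ha)
    have hc' : 0 < euclNorm c := lt_of_le_of_ne (enorm_nonneg' c) (Ne.symm hc)
    set t : ℝ := Real.sqrt (euclNorm c / euclNorm a) with htdef
    have ht : 0 < t := Real.sqrt_pos.2 (div_pos hc' ha')
    have ht2 : t ^ 2 = euclNorm c / euclNorm a := Real.sq_sqrt (le_of_lt (div_pos hc' ha'))
    have H := hpol (t • a) (t⁻¹ • c) (hsp t t⁻¹)
    have hL : (B *ᵥ (t • a)) ⬝ᵥ (B *ᵥ (t⁻¹ • c)) - (t • a) ⬝ᵥ (t⁻¹ • c)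
        = (B *ᵥ a) ⬝ᵥ (B *ᵥ c) - a ⬝ᵥ c := by
      simp only [Matrix.mulVec_smul, smul_dotProduct, dotProduct_smul,
        smul_eq_mul]
      rw [inv_mul_cancel_left₀ ht.ne', inv_mul_cancel_left₀ ht.ne']
    have hR : nsq (t • a - t⁻¹ • c) = 2 * (euclNorm a * euclNorm c) - 2 * (a ⬝ᵥ c) := by
      rw [nsq_sub]
      simp only [smul_dotProduct, dotProduct_smul, smul_eq_mul, nsq_smul]
      rw [inv_mul_cancel_left₀ ht.ne', inv_pow, ht2, ← enorm_sq a, ← enorm_sq c]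
      field_simp
      ring
    rw [hL, hR] at H
    have hcs2 : -(a ⬝ᵥ c) ≤ euclNorm a * euclNorm c := by
      have h := cs (-a) c
      rw [neg_dotProduct, enorm_neg] at h
      exact h
    have hmul : γ * (2 * (euclNorm a * euclNorm c) - 2 * (a ⬝ᵥ c)) ≤ γ * (4 * (euclNorm a * euclNorm c)) :=
      mul_le_mul_of_nonneg_left (by linarith) hγ0
    have hrr : γ * (4 * (euclNorm a * euclNorm c)) = 4 * (γ * (euclNorm a * euclNorm c)) := by ring
    linarith
  -- support set
  set T : Finset (Fin N) := supp u'' ∪ supp xs with hTdef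
  have hcardU : (T ∪ supp u').card ≤ 3 * s := by
    have h1c := Finset.card_union_le T (supp u')
    have h2c := Finset.card_union_le (supp u'') (supp xs)
    rw [← hTdef] at h2c
    have e1 : (supp u'').card ≤ s := hu''s
    have e2 : (supp xs).card ≤ s := hxs
    have e3 : (supp u').card ≤ s := hu'
    omega
  have hsparse : ∀ p : Fin N → ℝ, supp p ⊆ T ∪ supp u' → IsSparse (3 * s) p :=
    fun p hp => le_trans (Finset.card_le_card hp) hcardU
  -- decomposition of x'' - xs
  have hy : x'' - xs = (Bᵀ *ᵥ (B *ᵥ (xs - u')) - (xs - u')) + Bᵀ *ᵥ et := by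
    have hAAinv : (A * Aᵀ)⁻¹ = S⁻¹ * S⁻¹ := by rw [← hSS, Matrix.mul_inv_rev]
    have hbr : b - A *ᵥ u' = A *ᵥ (x - u') + e := by
      rw [hb, Matrix.mulVec_sub]; abel
    have hfeed : Aᵀ *ᵥ ((A * Aᵀ)⁻¹ *ᵥ (b - A *ᵥ u')) = Bᵀ *ᵥ (S⁻¹ *ᵥ (A *ᵥ (x - u') + e)) := by
      rw [hbr, hAAinv, Matrix.mulVec_mulVec, Matrix.mulVec_mulVec]
      congr 1
      rw [hBt, Matrix.mul_assoc]
    have hsplit : S⁻¹ *ᵥ (A *ᵥ (x - u') + e) = B *ᵥ (xs - u') + et := by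
      rw [het]
      simp only [Matrix.mulVec_add, hBz]
      have hx1 : x - u' = (xs - u') + (x - xs) := by abel
      rw [hx1, Matrix.mulVec_add]
      abel
    rw [hx'', hfeed, hsplit, Matrix.mulVec_add]
    abel
  set v : Fin N → ℝ := xs - u' with hvdef
  set y1 : Fin N → ℝ := Bᵀ *ᵥ (B *ᵥ v) - v with hy1def
  set y2 : Fin N → ℝ := Bᵀ *ᵥ et with hy2def
  set w1 : Fin N → ℝ := rst T y1 with hw1def
  set w2 : Fin N → ℝ := rst T y2 with hw2def
  have hsupp_w1 : ∀ i, i ∉ T → w1 i = 0 := fun i hi => by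
    rw [hw1def]; simp [rst, hi]
  have hvsupp : ∀ i, i ∉ supp xs → i ∉ supp u' → v i = 0 := by
    intro i h1' h2'
    rw [hvdef]
    simp [Pi.sub_apply, not_mem_supp h1', not_mem_supp h2']
  have hsp : ∀ t u : ℝ, IsSparse (3 * s) (t • w1 - u • v) := by
    intro t u
    apply hsparse
    intro i hi
    by_contra hmem
    simp only [Finset.mem_union, not_or] at hmem
    obtain ⟨hiT, hm3⟩ := hmem
    have hm2 : i ∉ supp xs := fun h => hiT (by rw [hTdef]; exact Finset.mem_union_right _ h)
    have hzero : (t • w1 - u • v) i = 0 := by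
      simp [Pi.sub_apply, Pi.smul_apply, hsupp_w1 i hiT, hvsupp i hm2 hm3]
    have hne : (t • w1 - u • v) i ≠ 0 := by simpa [supp] using hi
    exact hne hzero
  have hw12 : w1 + w2 = rst T (x'' - xs) := by
    rw [hy, hw1def, hw2def, rst_add]
  have hAdec : u'' - xs = rst T (u'' - x'') + (w1 + w2) := by
    rw [hw12]
    funext i
    by_cases hi : i ∈ T
    · simp only [rst, Pi.add_apply, Pi.sub_apply, if_pos hi]
      ring
    · rw [hTdef] at hi
      have hui : u'' i = 0 := not_mem_supp (fun h => hi (Finset.mem_union_left _ h))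
      have hxsi : xs i = 0 := not_mem_supp (fun h => hi (Finset.mem_union_right _ h))
      have hiT : i ∉ T := by rw [hTdef]; exact hi
      simp only [rst, Pi.add_apply, Pi.sub_apply, if_neg hiT, hui, hxsi]
      norm_num
  have hBB : nsq (rst T (u'' - x'')) ≤ nsq (rst T (x'' - xs)) := by
    have hmono := nsq_le_nsq (hu''b xs hxs)
    have heqc : rst Tᶜ (u'' - x'') = rst Tᶜ (xs - x'') := by
      funext i
      by_cases hi : i ∈ Tᶜ
      · have hiT : i ∉ T := Finset.mem_compl.1 hi
        rw [hTdef] at hiT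
        have hui : u'' i = 0 := not_mem_supp (fun h => hiT (Finset.mem_union_left _ h))
        have hxsi : xs i = 0 := not_mem_supp (fun h => hiT (Finset.mem_union_right _ h))
        simp [rst, hi, Pi.sub_apply, hui, hxsi]
      · simp [rst, hi]
    have d1 := nsq_rst_add_compl T (u'' - x'')
    have d2 := nsq_rst_add_compl T (xs - x'')
    have hneg : rst T (xs - x'') = -(rst T (x'' - xs)) := by
      funext i
      by_cases hi : i ∈ T <;>
        simp [rst, hi, Pi.neg_apply, Pi.sub_apply, neg_sub]
    rw [heqc] at d1
    rw [hneg, nsq_neg] at d2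
    linarith
  have hstep3 : euclNorm (u'' - xs) ≤ 2 * (euclNorm w1 + euclNorm w2) := by
    have t1 : euclNorm (u'' - xs) ≤ euclNorm (rst T (u'' - x'')) + euclNorm (w1 + w2) := by
      rw [hAdec]; exact enorm_triangle _ _
    have t2 : euclNorm (rst T (u'' - x'')) ≤ euclNorm (rst T (x'' - xs)) := enorm_le_enorm hBB
    have t3 : euclNorm (w1 + w2) = euclNorm (rst T (x'' - xs)) := by rw [hw12]
    have t4 : euclNorm (w1 + w2) ≤ euclNorm w1 + euclNorm w2 := enorm_triangle _ _
    linarith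
  have hkey : nsq w1 = (B *ᵥ w1) ⬝ᵥ (B *ᵥ v) - w1 ⬝ᵥ v := by
    have h1' : w1 ⬝ᵥ y1 = nsq w1 := by rw [hw1def]; exact dot_rst_self T y1
    have h2' : w1 ⬝ᵥ y1 = (B *ᵥ w1) ⬝ᵥ (B *ᵥ v) - w1 ⬝ᵥ v := by
      rw [hy1def, dotProduct_sub, adj (Bᵀ) w1 (B *ᵥ v), Matrix.transpose_transpose]
    rw [← h1', h2']
  have h4 : euclNorm w1 ≤ γ * euclNorm v := by
    have hD := hpol2 w1 v hsp
    rw [← hkey, ← enorm_sq] at hD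
    rcases eq_or_lt_of_le (enorm_nonneg' w1) with h0 | h0
    · rw [← h0]; exact mul_nonneg hγ0 (enorm_nonneg' v)
    · refine le_of_mul_le_mul_right ?_ h0
      calc euclNorm w1 * euclNorm w1 = euclNorm w1 ^ 2 := by ring
        _ ≤ γ * (euclNorm w1 * euclNorm v) := hD
        _ = γ * euclNorm v * euclNorm w1 := by ring
  have t1 : nsq w2 ≤ nsq y2 := by rw [hw2def]; exact nsq_rst_le T y2
  have t2 : nsq y2 = nsq et := by
    rw [hy2def]
    show (Bᵀ *ᵥ et) ⬝ᵥ (Bᵀ *ᵥ et) = et ⬝ᵥ et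
    rw [adj (Bᵀ) (Bᵀ *ᵥ et) et, Matrix.transpose_transpose, Matrix.mulVec_mulVec,
      hBBt, Matrix.one_mulVec]
  have h5 : euclNorm w2 ≤ euclNorm et := by
    rw [enorm_eq, enorm_eq]
    exact Real.sqrt_le_sqrt (le_of_le_of_eq t1 t2)
  have hvnorm : euclNorm v = euclNorm (u' - xs) := by
    rw [hvdef, ← neg_sub u' xs, enorm_neg]
  calc euclNorm (u'' - xs) ≤ 2 * (euclNorm w1 + euclNorm w2) := hstep3
    _ ≤ 2 * (γ * euclNorm v + euclNorm et) := by linarith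
    _ = 2 * γ * euclNorm (u' - xs) + 2 * euclNorm et := by rw [hvnorm]; ring
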